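/- arXiv:1408.3604 — 10 statements merged into one kernel-verified Lean document; each statement's English description precedes it below -/
import Mathlib

section
/- Let L be a regular abstract logic (the set of all expressions is not a theory) whose set of theories is closed under unions of chains. Then every theory of L is the intersection of a nonempty family of totally prime theories, i.e., the set of totally prime theories is a generator set for L. -/
variable {α : Type*}

/-- A theory `T` is totally prime if whenever `T` is the intersection of a
nonempty family of theories, `T` belongs to that family. -/
def TotallyPrime (Th : Set (Set α)) (T : Set α) : Prop :=
  T ∈ Th ∧ ∀ 𝒯 ⊆ Th, 𝒯.Nonempty → T = ⋂₀ 𝒯 → T ∈ 𝒯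

theorem stmt0 (Th : Set (Set α))
    (hne : Th.Nonempty)
    (hinter : ∀ 𝒯 ⊆ Th, 𝒯.Nonempty → ⋂₀ 𝒯 ∈ Th)
    (hreg : (Set.univ : Set α) ∉ Th)
    (hchain : ∀ 𝒞 ⊆ Th, 𝒞.Nonempty → IsChain (· ⊆ ·) 𝒞 → ⋃₀ 𝒞 ∈ Th) :
    ∀ T ∈ Th, ∃ 𝒯 ⊆ {P | TotallyPrime Th P}, 𝒯.Nonempty ∧ T = ⋂₀ 𝒯 := by
  intro T hT
  -- For each φ ∉ T, find a totally prime theory containing T avoiding φ.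
  have key : ∀ φ ∉ T, ∃ M, TotallyPrime Th M ∧ T ⊆ M ∧ φ ∉ M := by
    intro φ hφ
    set P : Set (Set α) := {S | S ∈ Th ∧ T ⊆ S ∧ φ ∉ S} with hP
    have hZ : ∀ c ⊆ P, IsChain (· ⊆ ·) c → c.Nonempty → ∃ ub ∈ P, ∀ s ∈ c, s ⊆ ub := by
      intro c hc hcchain hcne
      refine ⟨⋃₀ c, ⟨hchain c (fun s hs => (hc hs).1) hcne hcchain, ?_, ?_⟩,
        fun s hs => Set.subset_sUnion_of_mem hs⟩
      · obtain ⟨s, hs⟩ := hcne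
        exact (hc hs).2.1.trans (Set.subset_sUnion_of_mem hs)
      · rintro ⟨s, hs, hφs⟩
        exact (hc hs).2.2 hφs
    obtain ⟨M, hTM, hMmax⟩ := zorn_subset_nonempty P hZ T ⟨hT, subset_rfl, hφ⟩
    obtain ⟨hMTh, -, hφM⟩ := hMmax.1
    refine ⟨M, ⟨hMTh, ?_⟩, hTM, hφM⟩
    intro 𝒯 h𝒯 h𝒯ne hMeq
    by_contra hnot
    have hx : φ ∈ ⋂₀ 𝒯 := by
      intro S hS
      have hMS : M ⊆ S := hMeq ▸ Set.sInter_subset_of_mem hS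
      by_contra hφS
      have heq := Set.Subset.antisymm (hMmax.2 ⟨h𝒯 hS, hTM.trans hMS, hφS⟩ hMS) hMS
      exact hnot (heq ▸ hS)
    rw [← hMeq] at hx
    exact hφM hx
  choose M hMtp hTM hφM using key
  have hTne : T ≠ Set.univ := fun h => hreg (h ▸ hT)
  obtain ⟨φ₀, hφ₀⟩ : ∃ φ, φ ∉ T := by
    by_contra h
    push_neg at h
    exact hTne (Set.eq_univ_of_forall h)
  refine ⟨{S | ∃ φ, ∃ h : φ ∉ T, S = M φ h}, ?_, ⟨M φ₀ hφ₀, φ₀, hφ₀, rfl⟩, ?_⟩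
  · rintro S ⟨φ, h, rfl⟩; exact hMtp φ h
  · apply Set.Subset.antisymm
    · intro x hx S
      rintro ⟨φ, h, rfl⟩
      exact hTM φ h hx
    · intro x hx
      by_contra hxT
      exact hφM x hxT (hx _ ⟨x, hxT, rfl⟩)
end

section
/- Let L be a regular abstract logic closed under unions of chains, let T0 be a theory and a an expression with a ∉ T0. Then there exists a totally prime theory Ta with T0 ⊆ Ta and a ∉ Ta. -/
variable {α : Type*}

theorem stmt1 (Th : Set (Set α))
    (hne : Th.Nonempty)
    (hinter : ∀ 𝒯 ⊆ Th, 𝒯.Nonempty → ⋂₀ 𝒯 ∈ Th)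
    (hreg : (Set.univ : Set α) ∉ Th)
    (hchain : ∀ 𝒞 ⊆ Th, 𝒞.Nonempty → IsChain (· ⊆ ·) 𝒞 → ⋃₀ 𝒞 ∈ Th)
    (T0 : Set α) (hT0 : T0 ∈ Th) (a : α) (ha : a ∉ T0) :
    ∃ Ta : Set α, TotallyPrime Th Ta ∧ T0 ⊆ Ta ∧ a ∉ Ta := by
  set S : Set (Set α) := {T | T ∈ Th ∧ T0 ⊆ T ∧ a ∉ T} with hS
  have hub : ∀ c ⊆ S, IsChain (· ⊆ ·) c → c.Nonempty →
      ∃ ub ∈ S, ∀ s ∈ c, s ⊆ ub := by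
    intro c hc hch hcne
    refine ⟨⋃₀ c, ⟨hchain c (fun t ht => (hc ht).1) hcne hch, ?_, ?_⟩,
      fun s hs => Set.subset_sUnion_of_mem hs⟩
    · obtain ⟨t, ht⟩ := hcne
      exact (hc ht).2.1.trans (Set.subset_sUnion_of_mem ht)
    · rintro ⟨t, ht, hat⟩
      exact (hc ht).2.2 hat
  obtain ⟨Ta, hsub, hmaxl⟩ :=
    zorn_subset_nonempty S hub T0 ⟨hT0, subset_rfl, ha⟩
  obtain ⟨hTaTh, hT0Ta, haTa⟩ := hmaxl.prop
  have hmax : ∀ T ∈ S, Ta ⊆ T → T = Ta := fun T hT h => (hmaxl.eq_of_subset hT h).symm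
  refine ⟨Ta, ⟨hTaTh, ?_⟩, hT0Ta, haTa⟩
  intro 𝒯 h𝒯 h𝒯ne heq
  by_contra hTa
  have : a ∈ ⋂₀ 𝒯 := by
    intro T hT
    have hTaT : Ta ⊆ T := heq ▸ Set.sInter_subset_of_mem hT
    by_contra haT
    have : T = Ta := hmax T ⟨h𝒯 hT, hT0Ta.trans hTaT, haT⟩ hTaT
    exact hTa (this ▸ hT)
  exact haTa (heq ▸ this)
end

section
/- In a regular abstract logic closed under unions of chains, any maximal theory among those extending T0 and omitting a given expression a is totally prime. -/
variable {α : Type*}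

theorem stmt2 (Th : Set (Set α))
    (hne : Th.Nonempty)
    (hinter : ∀ 𝒯 ⊆ Th, 𝒯.Nonempty → ⋂₀ 𝒯 ∈ Th)
    (hreg : (Set.univ : Set α) ∉ Th)
    (hchain : ∀ 𝒞 ⊆ Th, 𝒞.Nonempty → IsChain (· ⊆ ·) 𝒞 → ⋃₀ 𝒞 ∈ Th)
    (T0 : Set α) (hT0 : T0 ∈ Th) (a : α) (ha : a ∉ T0)
    (M : Set α) (hM : M ∈ Th) (hT0M : T0 ⊆ M) (haM : a ∉ M)
    (hmax : ∀ T ∈ Th, T0 ⊆ T → a ∉ T → M ⊆ T → T = M) :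
    TotallyPrime Th M := by
  refine ⟨hM, fun 𝒯 h𝒯 hTe hMi => ?_⟩
  by_contra hMn
  apply haM
  rw [hMi]
  intro T hT
  have hMT : M ⊆ T := hMi ▸ Set.sInter_subset_of_mem hT
  by_contra haT
  exact hMn ((hmax T (h𝒯 hT) (hT0M.trans hMT) haT hMT) ▸ hT)
end

section
/- Let L be an intuitionistic abstract logic and P a prime theory. Then (a → b) ∈ P if and only if for every prime theory Q with P ⊆ Q, a ∈ Q implies b ∈ Q. -/
variable {α : Type*}

/-- A theory `T` is prime if whenever `T` is the intersection of a finite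
nonempty family of theories, `T` belongs to that family. -/
def PrimeTheory (Th : Set (Set α)) (T : Set α) : Prop :=
  T ∈ Th ∧ ∀ 𝒯 ⊆ Th, 𝒯.Finite → 𝒯.Nonempty → T = ⋂₀ 𝒯 → T ∈ 𝒯

lemma totallyPrime_prime {Th : Set (Set α)} {T : Set α} (h : TotallyPrime Th T) :
    PrimeTheory Th T :=
  ⟨h.1, fun 𝒯 h𝒯 _ hne heq => h.2 𝒯 h𝒯 hne heq⟩

theorem stmt5 (Th : Set (Set α)) (imp : α → α → α)
    (hne : Th.Nonempty)
    (hinter : ∀ 𝒯 ⊆ Th, 𝒯.Nonempty → ⋂₀ 𝒯 ∈ Th)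
    (hgen : ∀ T ∈ Th, ∃ 𝒯 ⊆ {P | TotallyPrime Th P}, 𝒯.Nonempty ∧ T = ⋂₀ 𝒯)
    (himp : ∀ a b : α, ∀ T, TotallyPrime Th T →
      (imp a b ∈ T ↔ ∀ T', TotallyPrime Th T' → T ⊆ T' → a ∈ T' → b ∈ T'))
    (a b : α) (P : Set α) (hP : PrimeTheory Th P) :
    imp a b ∈ P ↔ ∀ Q, PrimeTheory Th Q → P ⊆ Q → a ∈ Q → b ∈ Q := by
  constructor
  · intro hab Q hQ hPQ haQ
    obtain ⟨𝒯, h𝒯, h𝒯ne, hQeq⟩ := hgen Q hQ.1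
    rw [hQeq]
    intro T hT
    have hQT : Q ⊆ T := hQeq ▸ Set.sInter_subset_of_mem hT
    have hTtp : TotallyPrime Th T := h𝒯 hT
    exact (himp a b T hTtp).mp (hQT (hPQ hab)) T hTtp subset_rfl (hQT haQ)
  · intro h
    obtain ⟨𝒯, h𝒯, h𝒯ne, hPeq⟩ := hgen P hP.1
    rw [hPeq]
    intro T hT
    have hTtp : TotallyPrime Th T := h𝒯 hT
    have hPT : P ⊆ T := hPeq ▸ Set.sInter_subset_of_mem hT
    exact (himp a b T hTtp).mpr
      (fun T' hT' hTT' haT' => h T' (totallyPrime_prime hT') (hPT.trans hTT') haT')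
end

section
/- Let L be a distributive abstract logic, T a theory, and S a nonempty set of expressions closed under disjunction with T ∩ S = ∅. Then there exists a prime theory P with T ⊆ P and P ∩ S = ∅. -/
variable {α : Type*}

theorem stmt6 (Th : Set (Set α)) (and or : α → α → α)
    (hne : Th.Nonempty)
    (hinter : ∀ 𝒯 ⊆ Th, 𝒯.Nonempty → ⋂₀ 𝒯 ∈ Th)
    (hchain : ∀ 𝒞 ⊆ Th, 𝒞.Nonempty → IsChain (· ⊆ ·) 𝒞 → ⋃₀ 𝒞 ∈ Th)
    (hgen : ∀ T ∈ Th, ∃ 𝒯 ⊆ {P | TotallyPrime Th P}, 𝒯.Nonempty ∧ T = ⋂₀ 𝒯)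
    (hand : ∀ a b : α, ∀ Q, TotallyPrime Th Q → (and a b ∈ Q ↔ a ∈ Q ∧ b ∈ Q))
    (hor : ∀ a b : α, ∀ Q, TotallyPrime Th Q → (or a b ∈ Q ↔ a ∈ Q ∨ b ∈ Q))
    (T : Set α) (hT : T ∈ Th)
    (S : Set α) (hSne : S.Nonempty)
    (hSdisj : ∀ a ∈ S, ∀ b ∈ S, or a b ∈ S)
    (hTS : T ∩ S = ∅) :
    ∃ P : Set α, PrimeTheory Th P ∧ T ⊆ P ∧ P ∩ S = ∅ := by
  -- key fact: theories absorb disjunctions from either side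
  have orMem : ∀ U ∈ Th, ∀ a b : α, (a ∈ U ∨ b ∈ U) → or a b ∈ U := by
    intro U hU a b hab
    obtain ⟨𝒯, h𝒯, h𝒯ne, hUeq⟩ := hgen U hU
    rw [hUeq]
    intro Q hQ
    have hQtp : TotallyPrime Th Q := h𝒯 hQ
    have hUQ : U ⊆ Q := hUeq ▸ Set.sInter_subset_of_mem hQ
    exact (hor a b Q hQtp).mpr (hab.imp (fun h => hUQ h) (fun h => hUQ h))
  -- Zorn
  set 𝒮 : Set (Set α) := {U | U ∈ Th ∧ T ⊆ U ∧ U ∩ S = ∅} with h𝒮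
  have hzorn : ∀ c ⊆ 𝒮, IsChain (· ⊆ ·) c → c.Nonempty → ∃ ub ∈ 𝒮, ∀ s ∈ c, s ⊆ ub := by
    intro c hc hchainc hcne
    refine ⟨⋃₀ c, ⟨hchain c (fun U hU => (hc hU).1) hcne hchainc, ?_, ?_⟩,
      fun s hs => Set.subset_sUnion_of_mem hs⟩
    · obtain ⟨U, hU⟩ := hcne
      exact (hc hU).2.1.trans (Set.subset_sUnion_of_mem hU)
    · rw [Set.eq_empty_iff_forall_notMem]
      rintro x ⟨⟨U, hU, hxU⟩, hxS⟩
      have h2 := (hc hU).2.2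
      have : x ∈ U ∩ S := ⟨hxU, hxS⟩
      rw [h2] at this
      exact absurd this (Set.notMem_empty x)
  obtain ⟨P, hTP, hPmax⟩ := zorn_subset_nonempty 𝒮 hzorn T ⟨hT, subset_rfl, hTS⟩
  obtain ⟨hPTh, _, hPS⟩ := hPmax.prop
  refine ⟨P, ⟨hPTh, ?_⟩, hTP, hPS⟩
  intro 𝒯 h𝒯Th h𝒯fin h𝒯ne hPeq
  by_contra hPnotin
  -- every member of 𝒯 strictly contains P, hence meets S
  have hmeets : ∀ U ∈ 𝒯, U ∈ Th ∧ (U ∩ S).Nonempty := by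
    intro U hU
    have hPU : P ⊆ U := hPeq ▸ Set.sInter_subset_of_mem hU
    refine ⟨h𝒯Th hU, ?_⟩
    by_contra hUS
    rw [Set.not_nonempty_iff_eq_empty] at hUS
    have hUmem : U ∈ 𝒮 := ⟨h𝒯Th hU, hTP.trans hPU, hUS⟩
    have : U = P := subset_antisymm (hPmax.2 hUmem hPU) hPU
    exact hPnotin (this ▸ hU)
  -- produce a common element of S in all members of 𝒯
  have key : ∀ 𝒰 : Set (Set α), 𝒰.Finite →
      (∀ U ∈ 𝒰, U ∈ Th ∧ (U ∩ S).Nonempty) → ∃ c ∈ S, ∀ U ∈ 𝒰, c ∈ U := by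
    intro 𝒰 hfin
    refine Set.Finite.induction_on (motive := fun 𝒰 _ =>
      (∀ U ∈ 𝒰, U ∈ Th ∧ (U ∩ S).Nonempty) → ∃ c ∈ S, ∀ U ∈ 𝒰, c ∈ U) 𝒰 hfin ?_ ?_
    · intro _
      obtain ⟨s, hs⟩ := hSne
      exact ⟨s, hs, fun U hU => absurd hU (Set.notMem_empty U)⟩
    · intro V 𝒱 hV hVfin ih h
      obtain ⟨c, hcS, hc⟩ := ih (fun U hU => h U (Set.mem_insert_of_mem _ hU))
      obtain ⟨hVTh, a, haV, haS⟩ := h V (Set.mem_insert _ _)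
      refine ⟨or a c, hSdisj a haS c hcS, ?_⟩
      intro U hU
      rcases hU with rfl | hU
      · exact orMem U hVTh a c (Or.inl haV)
      · exact orMem U (h U (Set.mem_insert_of_mem _ hU)).1 a c (Or.inr (hc U hU))
  obtain ⟨c, hcS, hc⟩ := key 𝒯 h𝒯fin hmeets
  have hcP : c ∈ P := hPeq ▸ (fun Q hQ => hc Q hQ)
  have : c ∈ P ∩ S := ⟨hcP, hcS⟩
  rw [hPS] at this
  exact absurd this (Set.notMem_empty c)
end

section
/- Let L be a distributive abstract logic, T a theory, and a an expression with a ∉ T. Then there exists a prime theory P with T ⊆ P and a ∉ P. -/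
variable {α : Type*}

theorem stmt7 (Th : Set (Set α)) (and or : α → α → α)
    (hne : Th.Nonempty)
    (hinter : ∀ 𝒯 ⊆ Th, 𝒯.Nonempty → ⋂₀ 𝒯 ∈ Th)
    (hchain : ∀ 𝒞 ⊆ Th, 𝒞.Nonempty → IsChain (· ⊆ ·) 𝒞 → ⋃₀ 𝒞 ∈ Th)
    (hgen : ∀ T ∈ Th, ∃ 𝒯 ⊆ {P | TotallyPrime Th P}, 𝒯.Nonempty ∧ T = ⋂₀ 𝒯)
    (hand : ∀ a b : α, ∀ Q, TotallyPrime Th Q → (and a b ∈ Q ↔ a ∈ Q ∧ b ∈ Q))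
    (hor : ∀ a b : α, ∀ Q, TotallyPrime Th Q → (or a b ∈ Q ↔ a ∈ Q ∨ b ∈ Q))
    (T : Set α) (hT : T ∈ Th) (a : α) (ha : a ∉ T) :
    ∃ P : Set α, PrimeTheory Th P ∧ T ⊆ P ∧ a ∉ P := by
  set S : Set (Set α) := {P | P ∈ Th ∧ T ⊆ P ∧ a ∉ P} with hS
  have hzorn : ∀ c ⊆ S, IsChain (· ⊆ ·) c → c.Nonempty → ∃ ub ∈ S, ∀ s ∈ c, s ⊆ ub := by
    intro c hc hch hcne
    refine ⟨⋃₀ c, ⟨hchain c (fun x hx => (hc hx).1) hcne hch, ?_, ?_⟩,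
      fun s hs => Set.subset_sUnion_of_mem hs⟩
    · obtain ⟨x, hx⟩ := hcne
      exact (hc hx).2.1.trans (Set.subset_sUnion_of_mem hx)
    · rintro ⟨x, hx, hax⟩
      exact (hc hx).2.2 hax
  obtain ⟨P, hTP, hPm⟩ := zorn_subset_nonempty S hzorn T ⟨hT, subset_rfl, ha⟩
  refine ⟨P, ⟨hPm.prop.1, ?_⟩, hPm.prop.2.1, hPm.prop.2.2⟩
  intro 𝒯 h𝒯 _ h𝒯ne hPeq
  by_contra hP𝒯
  apply hPm.prop.2.2
  rw [hPeq]
  rintro Q hQ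
  have hPQ : P ⊆ Q := hPeq ▸ Set.sInter_subset_of_mem hQ
  by_contra haQ
  have : Q = P := hPm.eq_of_ge ⟨h𝒯 hQ, hPm.prop.2.1.trans hPQ, haQ⟩ hPQ
  exact hP𝒯 (this ▸ hQ)
end

section
/- Let A be a bounded distributive lattice. Define an abstract logic whose expressions are elements of A and whose theories are the proper filters of A. Then the set of theories is closed under nonempty intersections and under unions of nonempty chains, and the prime theories (theories that are not proper intersections of finitely many strictly larger theories) are exactly the prime filters of A. -/
variable {α : Type*}

/-- A filter of a lattice: nonempty, upward closed, and closed under binary meets. -/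
def IsLatFilter [Lattice α] (F : Set α) : Prop :=
  F.Nonempty ∧ (∀ x ∈ F, ∀ y, x ≤ y → y ∈ F) ∧ ∀ x ∈ F, ∀ y ∈ F, x ⊓ y ∈ F

/-- A prime filter: a proper filter such that `a ⊔ b ∈ F` implies `a ∈ F` or `b ∈ F`. -/
def IsPrimeFilter [Lattice α] (F : Set α) : Prop :=
  IsLatFilter F ∧ F ≠ Set.univ ∧ ∀ a b : α, a ⊔ b ∈ F → a ∈ F ∨ b ∈ F

lemma top_mem_of_filter [Lattice α] [BoundedOrder α] {F : Set α} (h : IsLatFilter F) :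
    ⊤ ∈ F := by
  obtain ⟨x, hx⟩ := h.1
  exact h.2.1 x hx ⊤ le_top

lemma bot_not_mem_of_proper [Lattice α] [BoundedOrder α] {F : Set α} (h : IsLatFilter F)
    (hne : F ≠ Set.univ) : ⊥ ∉ F := by
  intro hbot
  exact hne (Set.eq_univ_of_forall fun y => h.2.1 ⊥ hbot y bot_le)

lemma prime_sup' [Lattice α] {P : Set α} (hP : IsPrimeFilter P) {β : Type*}
    {s : Finset β} (hs : s.Nonempty) (f : β → α) (h : s.sup' hs f ∈ P) :
    ∃ b ∈ s, f b ∈ P := by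
  induction hs using Finset.Nonempty.cons_induction with
  | singleton a => exact ⟨a, Finset.mem_singleton_self a, by simpa using h⟩
  | cons a s ha hs ih =>
    rw [Finset.sup'_cons hs] at h
    rcases hP.2.2 _ _ h with h1 | h2
    · exact ⟨a, Finset.mem_cons_self a s, h1⟩
    · obtain ⟨b, hb, hfb⟩ := ih h2
      exact ⟨b, Finset.mem_cons_of_mem hb, hfb⟩

theorem stmt11 [DistribLattice α] [BoundedOrder α] :
    (∀ 𝒯 ⊆ {F : Set α | IsLatFilter F ∧ F ≠ Set.univ}, 𝒯.Nonempty →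
      ⋂₀ 𝒯 ∈ {F : Set α | IsLatFilter F ∧ F ≠ Set.univ}) ∧
    (∀ 𝒞 ⊆ {F : Set α | IsLatFilter F ∧ F ≠ Set.univ}, 𝒞.Nonempty →
      IsChain (· ⊆ ·) 𝒞 → ⋃₀ 𝒞 ∈ {F : Set α | IsLatFilter F ∧ F ≠ Set.univ}) ∧
    (∀ P : Set α,
      PrimeTheory {F : Set α | IsLatFilter F ∧ F ≠ Set.univ} P ↔ IsPrimeFilter P) := by
  refine ⟨?_, ?_, ?_⟩
  · -- intersections
    rintro 𝒯 h𝒯 ⟨F0, hF0⟩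
    refine ⟨⟨⟨⊤, fun T hT => top_mem_of_filter (h𝒯 hT).1⟩, ?_, ?_⟩, ?_⟩
    · intro x hx y hxy T hT
      exact (h𝒯 hT).1.2.1 x (hx T hT) y hxy
    · intro x hx y hy T hT
      exact (h𝒯 hT).1.2.2 x (hx T hT) y (hy T hT)
    · intro h
      have : ⊥ ∈ F0 := by
        have : (⊥ : α) ∈ ⋂₀ 𝒯 := h ▸ Set.mem_univ _
        exact this F0 hF0
      exact bot_not_mem_of_proper (h𝒯 hF0).1 (h𝒯 hF0).2 this
  · -- chains
    rintro 𝒞 h𝒞 ⟨F0, hF0⟩ hchain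
    refine ⟨⟨⟨⊤, F0, hF0, top_mem_of_filter (h𝒞 hF0).1⟩, ?_, ?_⟩, ?_⟩
    · rintro x ⟨F, hF, hxF⟩ y hxy
      exact ⟨F, hF, (h𝒞 hF).1.2.1 x hxF y hxy⟩
    · rintro x ⟨F, hF, hxF⟩ y ⟨G, hG, hyG⟩
      rcases eq_or_ne F G with rfl | hne
      · exact ⟨F, hF, (h𝒞 hF).1.2.2 x hxF y hyG⟩
      · rcases hchain hF hG hne with hFG | hGF
        · exact ⟨G, hG, (h𝒞 hG).1.2.2 x (hFG hxF) y hyG⟩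
        · exact ⟨F, hF, (h𝒞 hF).1.2.2 x hxF y (hGF hyG)⟩
    · intro h
      have : (⊥ : α) ∈ ⋃₀ 𝒞 := h ▸ Set.mem_univ _
      obtain ⟨F, hF, hbot⟩ := this
      exact bot_not_mem_of_proper (h𝒞 hF).1 (h𝒞 hF).2 hbot
  · -- prime theories = prime filters
    intro P
    constructor
    · rintro ⟨⟨hPfil, hPprop⟩, hprime⟩
      refine ⟨hPfil, hPprop, ?_⟩
      intro a b hab
      by_contra hcon
      push_neg at hcon
      obtain ⟨haP, hbP⟩ := hcon
      set Ta : Set α := {x | ∃ p ∈ P, p ⊓ a ≤ x} with hTa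
      set Tb : Set α := {x | ∃ p ∈ P, p ⊓ b ≤ x} with hTb
      have hPsubTa : P ⊆ Ta := fun x hx => ⟨x, hx, inf_le_left⟩
      have hPsubTb : P ⊆ Tb := fun x hx => ⟨x, hx, inf_le_left⟩
      have haTa : a ∈ Ta := ⟨⊤, top_mem_of_filter hPfil, inf_le_right⟩
      have hbTb : b ∈ Tb := ⟨⊤, top_mem_of_filter hPfil, inf_le_right⟩
      -- Ta is a filter
      have hTafil : IsLatFilter Ta := by
        refine ⟨⟨a, haTa⟩, ?_, ?_⟩
        · rintro x ⟨p, hp, hpx⟩ y hxy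
          exact ⟨p, hp, hpx.trans hxy⟩
        · rintro x ⟨p, hp, hpx⟩ y ⟨q, hq, hqy⟩
          exact ⟨p ⊓ q, hPfil.2.2 p hp q hq, by
            calc p ⊓ q ⊓ a = (p ⊓ a) ⊓ (q ⊓ a) := inf_inf_distrib_right p q a
              _ ≤ x ⊓ y := inf_le_inf hpx hqy⟩
      have hTbfil : IsLatFilter Tb := by
        refine ⟨⟨b, hbTb⟩, ?_, ?_⟩
        · rintro x ⟨p, hp, hpx⟩ y hxy
          exact ⟨p, hp, hpx.trans hxy⟩
        · rintro x ⟨p, hp, hpx⟩ y ⟨q, hq, hqy⟩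
          exact ⟨p ⊓ q, hPfil.2.2 p hp q hq, by
            calc p ⊓ q ⊓ b = (p ⊓ b) ⊓ (q ⊓ b) := inf_inf_distrib_right p q b
              _ ≤ x ⊓ y := inf_le_inf hpx hqy⟩
      -- Ta is proper
      have hTaprop : Ta ≠ Set.univ := by
        intro h
        have : (⊥ : α) ∈ Ta := h ▸ Set.mem_univ _
        obtain ⟨p, hp, hpbot⟩ := this
        have h1 : p ⊓ (a ⊔ b) ∈ P := hPfil.2.2 p hp _ hab
        have h2 : p ⊓ (a ⊔ b) ≤ b := by
          rw [inf_sup_left]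
          have : p ⊓ a = ⊥ := le_bot_iff.mp hpbot
          rw [this, bot_sup_eq]
          exact inf_le_right
        exact hbP (hPfil.2.1 _ h1 b h2)
      have hTbprop : Tb ≠ Set.univ := by
        intro h
        have : (⊥ : α) ∈ Tb := h ▸ Set.mem_univ _
        obtain ⟨p, hp, hpbot⟩ := this
        have h1 : p ⊓ (a ⊔ b) ∈ P := hPfil.2.2 p hp _ hab
        have h2 : p ⊓ (a ⊔ b) ≤ a := by
          rw [inf_sup_left]
          have : p ⊓ b = ⊥ := le_bot_iff.mp hpbot
          rw [this, sup_bot_eq]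
          exact inf_le_right
        exact haP (hPfil.2.1 _ h1 a h2)
      -- P = Ta ∩ Tb
      have hinter : P = ⋂₀ {Ta, Tb} := by
        apply Set.Subset.antisymm
        · intro x hx
          rw [Set.sInter_pair]
          exact ⟨hPsubTa hx, hPsubTb hx⟩
        · intro x hx
          rw [Set.sInter_pair] at hx
          obtain ⟨⟨p, hp, hpx⟩, ⟨q, hq, hqx⟩⟩ := hx
          have hr : p ⊓ q ∈ P := hPfil.2.2 p hp q hq
          have h1 : p ⊓ q ⊓ (a ⊔ b) ∈ P := hPfil.2.2 _ hr _ hab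
          have h2 : p ⊓ q ⊓ (a ⊔ b) ≤ x := by
            rw [inf_sup_left]
            apply sup_le
            · exact le_trans (inf_le_inf_right a inf_le_left) hpx
            · exact le_trans (inf_le_inf_right b inf_le_right) hqx
          exact hPfil.2.1 _ h1 x h2
      have := hprime {Ta, Tb} (by
          rintro T (rfl | rfl)
          · exact ⟨hTafil, hTaprop⟩
          · exact ⟨hTbfil, hTbprop⟩)
        ((Set.finite_singleton Tb).insert Ta) ⟨Ta, Set.mem_insert _ _⟩ hinter
      simp only [Set.mem_insert_iff, Set.mem_singleton_iff] at this
      rcases this with h | h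
      · exact haP (by rw [h]; exact haTa)
      · exact hbP (by rw [h]; exact hbTb)
    · rintro ⟨hPfil, hPprop, hPprime⟩
      refine ⟨⟨hPfil, hPprop⟩, ?_⟩
      intro 𝒯 h𝒯 hfin hne heq
      by_contra hP𝒯
      have hsub : ∀ T ∈ 𝒯, P ⊆ T := fun T hT => heq ▸ Set.sInter_subset_of_mem hT
      have hchoice : ∀ T ∈ 𝒯, ∃ a, a ∈ T ∧ a ∉ P := by
        intro T hT
        by_contra h
        push_neg at h
        have : T = P := Set.Subset.antisymm (fun a ha => h a ha) (hsub T hT)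
        exact hP𝒯 (this ▸ hT)
      choose! f hf1 hf2 using hchoice
      have hsne : hfin.toFinset.Nonempty := by
        obtain ⟨T, hT⟩ := hne
        exact ⟨T, hfin.mem_toFinset.mpr hT⟩
      set s := hfin.toFinset
      have hsupP : s.sup' hsne f ∈ P := by
        rw [heq]
        intro T hT
        have hTs : T ∈ s := hfin.mem_toFinset.mpr hT
        exact (h𝒯 hT).1.2.1 (f T) (hf1 T hT) _ (Finset.le_sup' f hTs)
      obtain ⟨T, hTs, hfT⟩ := prime_sup' ⟨hPfil, hPprop, hPprime⟩ hsne f hsupP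
      exact hf2 T (hfin.mem_toFinset.mp hTs) hfT
end

section
/- Let L be an intuitionistic abstract logic with order a ≤ b iff S_a ⊆ S_b (S_a the prime theories containing a). Then the implication connective satisfies the Heyting adjunction: for all expressions z, a, b, z ≤ (a → b) if and only if z ∧ a ≤ b. -/
variable {α : Type*}

/-- `S_a`, the set of prime theories containing `a`. -/
def primeSet (Th : Set (Set α)) (a : α) : Set (Set α) :=
  {P | PrimeTheory Th P ∧ a ∈ P}

theorem stmt15 (Th : Set (Set α)) (and or imp : α → α → α)
    (hne : Th.Nonempty)
    (hinter : ∀ 𝒯 ⊆ Th, 𝒯.Nonempty → ⋂₀ 𝒯 ∈ Th)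
    (hgen : ∀ T ∈ Th, ∃ 𝒯 ⊆ {P | PrimeTheory Th P}, 𝒯.Nonempty ∧ T = ⋂₀ 𝒯)
    (hand : ∀ a b : α, ∀ P, PrimeTheory Th P → (and a b ∈ P ↔ a ∈ P ∧ b ∈ P))
    (himp : ∀ a b : α, ∀ P, PrimeTheory Th P →
      (imp a b ∈ P ↔ ∀ P', PrimeTheory Th P' → P ⊆ P' → a ∈ P' → b ∈ P'))
    (hmp : ∀ a b : α, ∀ T ∈ Th, a ∈ T → imp a b ∈ T → b ∈ T)
    (z a b : α) :
    primeSet Th z ⊆ primeSet Th (imp a b) ↔ primeSet Th (and z a) ⊆ primeSet Th b := by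
  constructor
  · intro h P hP
    obtain ⟨hPp, hza⟩ := hP
    obtain ⟨hz, ha⟩ := (hand z a P hPp).mp hza
    have himpP := (h ⟨hPp, hz⟩).2
    exact ⟨hPp, (himp a b P hPp).mp himpP P hPp subset_rfl ha⟩
  · intro h P hP
    obtain ⟨hPp, hz⟩ := hP
    refine ⟨hPp, (himp a b P hPp).mpr ?_⟩
    intro P' hP' hsub ha
    exact (h ⟨hP', (hand z a P' hP').mpr ⟨hsub hz, ha⟩⟩).2
end

section
/- Let L be an intuitionistic abstract logic. Then the quotient of its expressions by logical equivalence (a ≡ b iff a and b lie in the same prime theories), ordered by a ≤ b iff S_a ⊆ S_b, is a Heyting algebra with meet, join, and implication induced by ∧, ∨, →, bottom ⊥ and top ⊤. -/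
variable {α : Type*}

/-- Logical equivalence: lying in the same prime theories. -/
def logicSetoid (Th : Set (Set α)) : Setoid α :=
  ⟨fun a b => primeSet Th a = primeSet Th b, ⟨fun _ => rfl, Eq.symm, Eq.trans⟩⟩

section Aux16

variable (Th : Set (Set α))

lemma primeSet_and16 (and : α → α → α)
    (hand : ∀ a b : α, ∀ P, PrimeTheory Th P → (and a b ∈ P ↔ a ∈ P ∧ b ∈ P))
    (a b : α) : primeSet Th (and a b) = primeSet Th a ∩ primeSet Th b := by
  ext P
  simp only [primeSet, Set.mem_setOf_eq, Set.mem_inter_iff]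
  constructor
  · rintro ⟨hP, h⟩
    rcases (hand a b P hP).1 h with ⟨ha, hb⟩
    exact ⟨⟨hP, ha⟩, hP, hb⟩
  · rintro ⟨⟨hP, ha⟩, _, hb⟩
    exact ⟨hP, (hand a b P hP).2 ⟨ha, hb⟩⟩

lemma primeSet_or16 (or : α → α → α)
    (hor : ∀ a b : α, ∀ P, PrimeTheory Th P → (or a b ∈ P ↔ a ∈ P ∨ b ∈ P))
    (a b : α) : primeSet Th (or a b) = primeSet Th a ∪ primeSet Th b := by
  ext P
  simp only [primeSet, Set.mem_setOf_eq, Set.mem_union]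
  constructor
  · rintro ⟨hP, h⟩
    rcases (hor a b P hP).1 h with ha | hb
    · exact Or.inl ⟨hP, ha⟩
    · exact Or.inr ⟨hP, hb⟩
  · rintro (⟨hP, ha⟩ | ⟨hP, hb⟩)
    · exact ⟨hP, (hor a b P hP).2 (Or.inl ha)⟩
    · exact ⟨hP, (hor a b P hP).2 (Or.inr hb)⟩

lemma primeSet_imp16 (imp : α → α → α)
    (himp : ∀ a b : α, ∀ P, PrimeTheory Th P →
      (imp a b ∈ P ↔ ∀ P', PrimeTheory Th P' → P ⊆ P' → a ∈ P' → b ∈ P'))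
    (a b : α) : primeSet Th (imp a b)
      = {P | PrimeTheory Th P ∧ ∀ P', PrimeTheory Th P' → P ⊆ P' →
          P' ∈ primeSet Th a → P' ∈ primeSet Th b} := by
  ext P
  simp only [primeSet, Set.mem_setOf_eq]
  constructor
  · rintro ⟨hP, h⟩
    exact ⟨hP, fun P' hP' hsub ha => ⟨hP', (himp a b P hP).1 h P' hP' hsub ha.2⟩⟩
  · rintro ⟨hP, h⟩
    exact ⟨hP, (himp a b P hP).2 fun P' hP' hsub ha => (h P' hP' hsub ⟨hP', ha⟩).2⟩

end Aux16

theorem stmt16 (Th : Set (Set α)) (and or imp : α → α → α) (bot top : α)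
    (hne : Th.Nonempty)
    (hinter : ∀ 𝒯 ⊆ Th, 𝒯.Nonempty → ⋂₀ 𝒯 ∈ Th)
    (hgen : ∀ T ∈ Th, ∃ 𝒯 ⊆ {P | PrimeTheory Th P}, 𝒯.Nonempty ∧ T = ⋂₀ 𝒯)
    (hand : ∀ a b : α, ∀ P, PrimeTheory Th P → (and a b ∈ P ↔ a ∈ P ∧ b ∈ P))
    (hor : ∀ a b : α, ∀ P, PrimeTheory Th P → (or a b ∈ P ↔ a ∈ P ∨ b ∈ P))
    (himp : ∀ a b : α, ∀ P, PrimeTheory Th P →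
      (imp a b ∈ P ↔ ∀ P', PrimeTheory Th P' → P ⊆ P' → a ∈ P' → b ∈ P'))
    (htop : ∀ P, PrimeTheory Th P → top ∈ P)
    (hbot : ∀ P, PrimeTheory Th P → bot ∉ P)
    (hsep : ∀ T ∈ Th, ∀ a ∉ T, ∃ P : Set α, PrimeTheory Th P ∧ T ⊆ P ∧ a ∉ P) :
    ∃ inst : HeytingAlgebra (Quotient (logicSetoid Th)),
      (∀ a b : α,
        (inst.le (Quotient.mk (logicSetoid Th) a) (Quotient.mk (logicSetoid Th) b)
          ↔ primeSet Th a ⊆ primeSet Th b) ∧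
        inst.inf (Quotient.mk (logicSetoid Th) a) (Quotient.mk (logicSetoid Th) b)
          = Quotient.mk (logicSetoid Th) (and a b) ∧
        inst.sup (Quotient.mk (logicSetoid Th) a) (Quotient.mk (logicSetoid Th) b)
          = Quotient.mk (logicSetoid Th) (or a b) ∧
        inst.himp (Quotient.mk (logicSetoid Th) a) (Quotient.mk (logicSetoid Th) b)
          = Quotient.mk (logicSetoid Th) (imp a b)) ∧
      inst.bot = Quotient.mk (logicSetoid Th) bot ∧
      inst.top = Quotient.mk (logicSetoid Th) top := by
  clear hne hinter hgen hsep
  have hand' := primeSet_and16 Th and hand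
  have hor' := primeSet_or16 Th or hor
  have himp' := primeSet_imp16 Th imp himp
  set S := logicSetoid Th with hS
  let q : α → Quotient S := Quotient.mk S
  have sound : ∀ {a b : α}, primeSet Th a = primeSet Th b → q a = q b :=
    fun h => Quotient.sound h
  let inf' : Quotient S → Quotient S → Quotient S :=
    Quotient.lift₂ (fun a b => q (and a b)) (by
      intro a b a' b' ha hb
      apply sound
      have ha' : primeSet Th a = primeSet Th a' := ha
      have hb' : primeSet Th b = primeSet Th b' := hb
      rw [hand', hand', ha', hb'])
  let sup' : Quotient S → Quotient S → Quotient S :=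
    Quotient.lift₂ (fun a b => q (or a b)) (by
      intro a b a' b' ha hb
      apply sound
      have ha' : primeSet Th a = primeSet Th a' := ha
      have hb' : primeSet Th b = primeSet Th b' := hb
      rw [hor', hor', ha', hb'])
  let himp'' : Quotient S → Quotient S → Quotient S :=
    Quotient.lift₂ (fun a b => q (imp a b)) (by
      intro a b a' b' ha hb
      apply sound
      have ha' : primeSet Th a = primeSet Th a' := ha
      have hb' : primeSet Th b = primeSet Th b' := hb
      rw [himp', himp', ha', hb'])
  let qset : Quotient S → Set (Set α) := Quotient.lift (primeSet Th) (fun _ _ h => h)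
  have qinj : Function.Injective qset := by
    intro x y
    induction x using Quotient.ind
    induction y using Quotient.ind
    exact fun h => Quotient.sound h
  letI instSup : Max (Quotient S) := ⟨sup'⟩
  letI instInf : Min (Quotient S) := ⟨inf'⟩
  have map_sup : ∀ x y : Quotient S, qset (x ⊔ y) = qset x ⊔ qset y := by
    intro x y
    induction x using Quotient.ind with | _ a =>
    induction y using Quotient.ind with | _ b =>
    exact hor' a b
  have map_inf : ∀ x y : Quotient S, qset (x ⊓ y) = qset x ⊓ qset y := by
    intro x y
    induction x using Quotient.ind with | _ a =>
    induction y using Quotient.ind with | _ b =>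
    exact hand' a b
  letI lat : Lattice (Quotient S) := letI : LE (Quotient S) := ⟨fun x y => qset x ≤ qset y⟩
    letI : LT (Quotient S) := ⟨fun x y => qset x < qset y⟩
    qinj.lattice qset Iff.rfl Iff.rfl map_sup map_inf
  have hle : ∀ a b : α, (q a ≤ q b) = (primeSet Th a ⊆ primeSet Th b) := fun _ _ => rfl
  letI inst : HeytingAlgebra (Quotient S) :=
    { lat with
      top := q top
      bot := q bot
      himp := himp''
      compl := fun x => himp'' x (q bot)
      le_top := by
        intro x
        induction x using Quotient.ind with | _ a =>
        show primeSet Th a ⊆ primeSet Th top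
        intro P hP
        exact ⟨hP.1, htop P hP.1⟩
      bot_le := by
        intro x
        induction x using Quotient.ind with | _ a =>
        show primeSet Th bot ⊆ primeSet Th a
        intro P hP
        exact absurd hP.2 (hbot P hP.1)
      le_himp_iff := by
        intro x y z
        induction x using Quotient.ind with | _ a =>
        induction y using Quotient.ind with | _ b =>
        induction z using Quotient.ind with | _ c =>
        show primeSet Th a ⊆ primeSet Th (imp b c) ↔
          primeSet Th (and a b) ⊆ primeSet Th c
        rw [himp', hand']
        constructor
        · rintro h P ⟨ha, hb⟩
          exact (h ha).2 P hb.1 (fun _ hp => hp) hb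
        · intro h P ha
          exact ⟨ha.1, fun P' hP' hsub hb => h ⟨⟨hP', hsub ha.2⟩, hb⟩⟩
      himp_bot := fun _ => rfl }
  refine ⟨inst, fun a b => ⟨Iff.rfl, rfl, rfl, rfl⟩, rfl, rfl⟩
end

section
/- Let A be a Heyting algebra and let a, b ∈ A. For every prime filter T of A: (a → b) ∈ T if and only if for every prime filter T' with T ⊆ T', a ∈ T' implies b ∈ T'. -/
variable {α : Type*}

theorem stmt17 [HeytingAlgebra α] (a b : α) (T : Set α) (hT : IsPrimeFilter T) :
    a ⇨ b ∈ T ↔ ∀ T' : Set α, IsPrimeFilter T' → T ⊆ T' → a ∈ T' → b ∈ T' := by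
  obtain ⟨⟨hne, hup, hmeet⟩, hproper, hprime⟩ := hT
  constructor
  · intro h T' ⟨⟨_, hup', hmeet'⟩, _, _⟩ hsub ha
    have : a ⊓ (a ⇨ b) ∈ T' := hmeet' a ha _ (hsub h)
    exact hup' _ this b (by simp [inf_himp_le])
  · intro H
    by_contra hnot
    -- the filter generated by T ∪ {a}
    set F : Set α := {x | ∃ t ∈ T, t ⊓ a ≤ x} with hF
    have hFfilter : Order.IsPFilter F := by
      refine Order.IsPFilter.of_def ?_ ?_ ?_
      · obtain ⟨t, ht⟩ := hne
        exact ⟨t ⊓ a, t, ht, le_rfl⟩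
      · rintro x ⟨t, ht, hx⟩ y ⟨s, hs, hy⟩
        exact ⟨x ⊓ y, ⟨t ⊓ s, hmeet t ht s hs,
          le_inf (le_trans (inf_le_inf_right a inf_le_left) hx)
                 (le_trans (inf_le_inf_right a inf_le_right) hy)⟩,
          inf_le_left, inf_le_right⟩
      · rintro x y hxy ⟨t, ht, hx⟩
        exact ⟨t, ht, hx.trans hxy⟩
    have hdisj : Disjoint ((hFfilter.toPFilter : Order.PFilter α) : Set α)
        ((Order.Ideal.principal b : Order.Ideal α) : Set α) := by
      rw [Set.disjoint_left]
      rintro x ⟨t, ht, hx⟩ hxb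
      have hxb' : x ≤ b := hxb
      have : t ≤ a ⇨ b := le_himp_iff.mpr (hx.trans hxb')
      exact hnot (hup t ht _ this)
    obtain ⟨J, hJprime, hbJ, hJdisj⟩ :=
      DistribLattice.prime_ideal_of_disjoint_filter_ideal hdisj
    have hbinJ : b ∈ J := hbJ (Order.Ideal.mem_principal.mpr le_rfl)
    set T' : Set α := (J : Set α)ᶜ with hT'
    have hT'filter : IsPrimeFilter T' := by
      refine ⟨⟨?_, ?_, ?_⟩, ?_, ?_⟩
      · exact Set.nonempty_compl.mpr (J.isProper_iff.mp hJprime.toIsProper)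
      · intro x hx y hxy hyJ
        exact hx (J.lower hxy hyJ)
      · intro x hx y hy hxyJ
        rcases hJprime.mem_or_mem hxyJ with h | h
        exacts [hx h, hy h]
      · intro h
        have : b ∈ T' := h ▸ Set.mem_univ b
        exact this hbinJ
      · intro x y hxy
        by_contra hc
        push_neg at hc
        simp only [hT', Set.mem_compl_iff, not_not] at hc hxy
        exact hxy (J.sup_mem hc.1 hc.2)
    have hTsub : T ⊆ T' := by
      intro t ht
      have htF : t ∈ ((hFfilter.toPFilter : Order.PFilter α) : Set α) :=
        ⟨t, ht, inf_le_left⟩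
      exact Set.disjoint_left.mp hJdisj htF
    have haT' : a ∈ T' := by
      obtain ⟨t, ht⟩ := hne
      have haF : a ∈ ((hFfilter.toPFilter : Order.PFilter α) : Set α) :=
        ⟨t, ht, inf_le_right⟩
      exact Set.disjoint_left.mp hJdisj haF
    exact H T' hT'filter hTsub haT' hbinJ
end
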